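/- arXiv:1710.00216 — 4 statements merged into one kernel-verified Lean document; each statement's English description precedes it below -/
import Mathlib

section
/- There exists a unique k₀ in the open interval (0,1) such that 2E(k₀) − K(k₀) = 0. (Numerically k₀ ≈ 0.909.) -/
open Real Set Filter Topology

/-- Complete elliptic integral of the first kind. -/
noncomputable def K (k : ℝ) : ℝ :=
  ∫ t in (0:ℝ)..(π/2), 1 / Real.sqrt (1 - k^2 * Real.sin t ^ 2)

/-- Complete elliptic integral of the second kind. -/
noncomputable def E (k : ℝ) : ℝ :=
  ∫ t in (0:ℝ)..(π/2), Real.sqrt (1 - k^2 * Real.sin t ^ 2)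

lemma Xpos {k t : ℝ} (hk : k^2 < 1) : 0 < 1 - k^2 * Real.sin t ^ 2 := by
  nlinarith [Real.sin_sq_le_one t, sq_nonneg k, sq_nonneg (Real.sin t)]

lemma contE (k : ℝ) : Continuous (fun t => Real.sqrt (1 - k^2 * Real.sin t ^ 2)) :=
  Real.continuous_sqrt.comp (by continuity)

lemma contK {k : ℝ} (hk : k^2 < 1) :
    Continuous (fun t => 1 / Real.sqrt (1 - k^2 * Real.sin t ^ 2)) :=
  continuous_const.div (contE k) fun t => (Real.sqrt_pos.mpr (Xpos hk)).ne'

/-- the combined integrand function -/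
noncomputable def F (k : ℝ) : ℝ :=
  ∫ t in (0:ℝ)..(π/2), (2 * Real.sqrt (1 - k^2 * Real.sin t ^ 2)
    - 1 / Real.sqrt (1 - k^2 * Real.sin t ^ 2))

lemma F_eq {k : ℝ} (hk : k^2 < 1) : F k = 2 * E k - K k := by
  unfold F E K
  rw [intervalIntegral.integral_sub (f := fun t => 2 * Real.sqrt (1 - k^2 * Real.sin t ^ 2))
      (g := fun t => 1 / Real.sqrt (1 - k^2 * Real.sin t ^ 2)) ((continuous_const.mul (contE k)).intervalIntegrable _ _)
      ((contK hk).intervalIntegrable _ _), intervalIntegral.integral_const_mul]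

lemma F_strictAnti {a b : ℝ} (ha : 0 ≤ a) (hab : a < b) (hb : b < 1) : F b < F a := by
  have ha2 : a^2 < 1 := by nlinarith
  have hb2 : b^2 < 1 := by nlinarith
  have hpos : 0 < F a - F b := by
    unfold F
    rw [← intervalIntegral.integral_sub
      (f := fun t => 2 * Real.sqrt (1 - a^2 * Real.sin t ^ 2) - 1 / Real.sqrt (1 - a^2 * Real.sin t ^ 2))
      (g := fun t => 2 * Real.sqrt (1 - b^2 * Real.sin t ^ 2) - 1 / Real.sqrt (1 - b^2 * Real.sin t ^ 2))
      (((continuous_const.mul (contE a)).sub (contK ha2)).intervalIntegrable _ _)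
      (((continuous_const.mul (contE b)).sub (contK hb2)).intervalIntegrable _ _)]
    apply intervalIntegral.intervalIntegral_pos_of_pos_on
    · exact (((continuous_const.mul (contE a)).sub (contK ha2)).sub
        ((continuous_const.mul (contE b)).sub (contK hb2))).intervalIntegrable _ _
    · intro t ht
      have hs : 0 < Real.sin t :=
        Real.sin_pos_of_pos_of_lt_pi ht.1 (by linarith [ht.2, Real.pi_pos])
      have hXb : 0 < 1 - b^2 * Real.sin t ^ 2 := Xpos hb2
      have hlt : 1 - b^2 * Real.sin t ^ 2 < 1 - a^2 * Real.sin t ^ 2 := by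
        have hab2 : a^2 < b^2 := by nlinarith
        have := mul_lt_mul_of_pos_right hab2 (by positivity : (0:ℝ) < Real.sin t ^ 2)
        linarith
      have h1 : Real.sqrt (1 - b^2 * Real.sin t ^ 2) < Real.sqrt (1 - a^2 * Real.sin t ^ 2) :=
        Real.sqrt_lt_sqrt hXb.le hlt
      have h2 : 1 / Real.sqrt (1 - a^2 * Real.sin t ^ 2)
          < 1 / Real.sqrt (1 - b^2 * Real.sin t ^ 2) :=
        one_div_lt_one_div_of_lt (Real.sqrt_pos.mpr hXb) h1
      linarith
    · linarith [Real.pi_pos]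
  linarith

lemma F_half_pos : 0 < F (1/2) := by
  unfold F
  apply intervalIntegral.intervalIntegral_pos_of_pos_on
  · exact ((continuous_const.mul (contE _)).sub (contK (by norm_num))).intervalIntegrable _ _
  · intro t _
    have h1 : (3:ℝ)/4 ≤ 1 - (1/2:ℝ)^2 * Real.sin t ^ 2 := by
      nlinarith [Real.sin_sq_le_one t]
    have hx : 0 < 1 - (1/2:ℝ)^2 * Real.sin t ^ 2 := by linarith
    have hs : 0 < Real.sqrt (1 - (1/2:ℝ)^2 * Real.sin t ^ 2) := Real.sqrt_pos.mpr hx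
    rw [sub_pos, div_lt_iff₀ hs]
    nlinarith [Real.mul_self_sqrt hx.le]
  · linarith [Real.pi_pos]

lemma E_le (k : ℝ) : E k ≤ π/2 := by
  have h : E k ≤ ∫ _ in (0:ℝ)..(π/2), (1:ℝ) := by
    apply intervalIntegral.integral_mono_on (by positivity)
      ((contE k).intervalIntegrable _ _) (continuous_const.intervalIntegrable _ _)
    intro t _
    have hle1 : 1 - k^2 * Real.sin t ^ 2 ≤ 1 := by nlinarith [sq_nonneg k, sq_nonneg (Real.sin t)]
    calc Real.sqrt (1 - k^2 * Real.sin t ^ 2) ≤ Real.sqrt 1 := Real.sqrt_le_sqrt hle1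
      _ = 1 := Real.sqrt_one
  simpa using h

lemma contH : Continuous (fun t : ℝ => 1 / Real.sqrt ((1/100:ℝ)^2 + (π/2 - t)^2)) := by
  apply continuous_const.div (Real.continuous_sqrt.comp (by continuity))
  intro t
  have : (0:ℝ) < (1/100:ℝ)^2 + (π/2 - t)^2 := by positivity
  exact (Real.sqrt_pos.mpr this).ne'

lemma integral_h : ∫ t in (0:ℝ)..(π/2), 1 / Real.sqrt ((1/100:ℝ)^2 + (π/2 - t)^2)
    = Real.arsinh (50*π) := by
  have hderiv : ∀ t ∈ uIcc (0:ℝ) (π/2),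
      HasDerivAt (fun t => -Real.arsinh ((π/2 - t)/(1/100)))
        (1 / Real.sqrt ((1/100:ℝ)^2 + (π/2 - t)^2)) t := by
    intro t _
    have hin : HasDerivAt (fun t : ℝ => (π/2 - t)/(1/100:ℝ)) (-1/(1/100:ℝ)) t :=
      (((hasDerivAt_id t).const_sub (π/2)).div_const (1/100))
    have harc := (Real.hasDerivAt_arsinh ((π/2 - t)/(1/100))).comp t hin
    have h2 := harc.neg
    refine h2.congr_deriv ?_
    have key : Real.sqrt (1 + ((π/2 - t)/(1/100))^2)
        = 100 * Real.sqrt ((1/100:ℝ)^2 + (π/2 - t)^2) := by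
      rw [show 1 + ((π/2 - t)/(1/100))^2 = 100^2 * ((1/100:ℝ)^2 + (π/2 - t)^2) by ring,
        Real.sqrt_mul (by norm_num : (0:ℝ) ≤ 100^2), Real.sqrt_sq (by norm_num : (0:ℝ) ≤ 100)]
    have hS : 0 < Real.sqrt ((1/100:ℝ)^2 + (π/2 - t)^2) :=
      Real.sqrt_pos.mpr (by positivity)
    rw [key]
    field_simp
  have := intervalIntegral.integral_eq_sub_of_hasDerivAt hderiv
    (contH.intervalIntegrable _ _)
  rw [this]
  rw [show (π/2 - π/2)/(1/100:ℝ) = 0 by ring, Real.arsinh_zero,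
    show (π/2 - 0)/(1/100:ℝ) = 50*π by ring]
  ring

lemma K_lb : Real.arsinh (50*π) ≤ K (19999/20000) := by
  unfold K
  rw [← integral_h]
  apply intervalIntegral.integral_mono_on (by positivity)
    (contH.intervalIntegrable _ _) ((contK (by norm_num)).intervalIntegrable _ _)
  intro t _
  have hcos : 1 - (π/2 - t)^2/2 ≤ Real.sin t := by
    have h := Real.one_sub_sq_div_two_le_cos (x := π/2 - t)
    rwa [Real.cos_pi_div_two_sub] at h
  have hXpos : 0 < 1 - (19999/20000:ℝ)^2 * Real.sin t ^ 2 := Xpos (by norm_num)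
  have hle : 1 - (19999/20000:ℝ)^2 * Real.sin t ^ 2 ≤ (1/100:ℝ)^2 + (π/2 - t)^2 := by
    nlinarith [sq_nonneg (1 - (19999/20000:ℝ) * Real.sin t), sq_nonneg (π/2 - t),
      Real.sin_le_one t]
  have h1 : Real.sqrt (1 - (19999/20000:ℝ)^2 * Real.sin t ^ 2)
      ≤ Real.sqrt ((1/100:ℝ)^2 + (π/2 - t)^2) := Real.sqrt_le_sqrt hle
  exact one_div_le_one_div_of_le (Real.sqrt_pos.mpr hXpos) h1

lemma pi_lt_arsinh : π < Real.arsinh (50*π) := by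
  have h3 : Real.exp 4 < 55 := by
    have h := Real.exp_one_lt_d9
    calc Real.exp 4 = Real.exp 1 ^ (4:ℕ) := by
          rw [show (4:ℝ) = ((4:ℕ):ℝ) * 1 by norm_num, Real.exp_nat_mul]
      _ < 2.7182818286 ^ (4:ℕ) := by
          exact pow_lt_pow_left₀ h (Real.exp_pos 1).le (by norm_num)
      _ < 55 := by norm_num
  have h2 : Real.exp π ≤ Real.exp 4 := Real.exp_le_exp.mpr Real.pi_le_four
  have h1 : Real.sinh π < 50*π := by
    rw [Real.sinh_eq]
    have h5 : 0 < Real.exp (-π) := Real.exp_pos _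
    have h6 : 3 < π := Real.pi_gt_three
    nlinarith
  calc π = Real.arsinh (Real.sinh π) := (Real.arsinh_sinh π).symm
    _ < Real.arsinh (50*π) := Real.arsinh_lt_arsinh.mpr h1

lemma contF : ContinuousOn F (Icc (1/2) (19999/20000)) := by
  have hpos : ∀ p : ℝ×ℝ, 0 < 1 - min (p.1^2) ((19999/20000:ℝ)^2) * Real.sin p.2 ^ 2 := by
    intro p
    have h0 : 0 ≤ min (p.1^2) ((19999/20000:ℝ)^2) := le_min (sq_nonneg _) (sq_nonneg _)
    have h1 : min (p.1^2) ((19999/20000:ℝ)^2) ≤ (19999/20000:ℝ)^2 := min_le_right _ _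
    nlinarith [Real.sin_sq_le_one p.2, sq_nonneg (Real.sin p.2)]
  have hd : Continuous (fun p : ℝ×ℝ => 1 - min (p.1^2) ((19999/20000:ℝ)^2) * Real.sin p.2 ^ 2) := by
    apply continuous_const.sub
    exact (((continuous_fst.pow 2).min continuous_const).mul
      ((Real.continuous_sin.comp continuous_snd).pow 2))
  have hG : Continuous (fun k : ℝ => ∫ t in (0:ℝ)..(π/2),
      (2 * Real.sqrt (1 - min (k^2) ((19999/20000:ℝ)^2) * Real.sin t ^ 2)
       - 1 / Real.sqrt (1 - min (k^2) ((19999/20000:ℝ)^2) * Real.sin t ^ 2))) := by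
    apply intervalIntegral.continuous_parametric_intervalIntegral_of_continuous'
    apply Continuous.sub
    · exact continuous_const.mul (Real.continuous_sqrt.comp hd)
    · exact continuous_const.div (Real.continuous_sqrt.comp hd)
        fun p => (Real.sqrt_pos.mpr (hpos p)).ne'
  apply hG.continuousOn.congr
  intro k hk
  have hk2 : k^2 ≤ (19999/20000:ℝ)^2 := by
    have h1 : (0:ℝ) ≤ k := le_trans (by norm_num) hk.1
    nlinarith [hk.2]
  unfold F
  simp only [min_eq_left hk2]

/-- There exists a unique `k₀ ∈ (0,1)` with `2E(k₀) − K(k₀) = 0`. -/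
theorem unique_root_k₀ :
    ∃! k₀ : ℝ, k₀ ∈ Set.Ioo (0:ℝ) 1 ∧ 2 * E k₀ - K k₀ = 0 := by
  have hF1 : F (19999/20000) < 0 := by
    have heq := F_eq (k := 19999/20000) (by norm_num)
    have hE := E_le (19999/20000 : ℝ)
    have hK := K_lb
    have hπ := pi_lt_arsinh
    linarith
  have h0mem : (0:ℝ) ∈ Icc (F (19999/20000)) (F (1/2)) := ⟨hF1.le, F_half_pos.le⟩
  obtain ⟨x, hx, hfx⟩ := intermediate_value_Icc' (by norm_num : (1/2:ℝ) ≤ 19999/20000) contF h0mem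
  have hx0 : (0:ℝ) < x := lt_of_lt_of_le (by norm_num) hx.1
  have hx1 : x < 1 := lt_of_le_of_lt hx.2 (by norm_num)
  have hx2 : x^2 < 1 := by nlinarith
  refine ⟨x, ⟨⟨hx0, hx1⟩, by rw [← F_eq hx2]; exact hfx⟩, ?_⟩
  rintro y ⟨hy, hy0⟩
  have hy2 : y^2 < 1 := by nlinarith [hy.1, hy.2]
  have hFy : F y = 0 := by rw [F_eq hy2]; exact hy0
  rcases lt_trichotomy y x with h | h | h
  · exfalso
    have := F_strictAnti hy.1.le h hx1
    rw [hfx, hFy] at this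
    exact lt_irrefl 0 this
  · exact h
  · exfalso
    have := F_strictAnti hx0.le h hy.2
    rw [hfx, hFy] at this
    exact lt_irrefl 0 this
end

section
/- The unique root k₀ ∈ (0,1) of the equation 2E(k) − K(k) = 0 satisfies 1 − 2k₀² < 0, i.e. k₀ > 1/√2; consequently the number Y₀¹ = (1 − 2k₀²)/(2k₀√(1 − k₀²)) is negative. -/
open Real Set Filter Topology

lemma aux_pos (k : ℝ) (hk0 : 0 < k) (hk1 : k < 1) (hk2 : k ^ 2 ≤ 1 / 2) :
    0 < 2 * E k - K k := by
  have hupos : ∀ t : ℝ, 0 < 1 - k ^ 2 * Real.sin t ^ 2 := by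
    intro t
    nlinarith [Real.sin_sq_le_one t, sq_nonneg (Real.sin t), sq_nonneg k]
  have hcu : Continuous fun t => 1 - k ^ 2 * Real.sin t ^ 2 := by continuity
  have hcs : Continuous fun t => Real.sqrt (1 - k ^ 2 * Real.sin t ^ 2) :=
    Real.continuous_sqrt.comp hcu
  have hsne : ∀ t : ℝ, Real.sqrt (1 - k ^ 2 * Real.sin t ^ 2) ≠ 0 := fun t =>
    ne_of_gt (Real.sqrt_pos.mpr (hupos t))
  have hcdiv : Continuous fun t : ℝ => 1 / Real.sqrt (1 - k ^ 2 * Real.sin t ^ 2) :=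
    continuous_const.div hcs hsne
  have hcf : Continuous fun t =>
      2 * Real.sqrt (1 - k ^ 2 * Real.sin t ^ 2)
        - 1 / Real.sqrt (1 - k ^ 2 * Real.sin t ^ 2) :=
    ((continuous_const.mul hcs).sub (continuous_const.div hcs hsne))
  have hEK : 2 * E k - K k = ∫ t in (0:ℝ)..(π/2),
      (2 * Real.sqrt (1 - k ^ 2 * Real.sin t ^ 2)
        - 1 / Real.sqrt (1 - k ^ 2 * Real.sin t ^ 2)) := by
    rw [E, K, ← intervalIntegral.integral_const_mul,
      ← intervalIntegral.integral_sub
        ((show Continuous fun t => 2 * Real.sqrt (1 - k ^ 2 * Real.sin t ^ 2) from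
          continuous_const.mul hcs).intervalIntegrable _ _)
        (hcdiv.intervalIntegrable _ _)]
  rw [hEK]
  apply intervalIntegral.intervalIntegral_pos_of_pos_on
    (hcf.intervalIntegrable _ _)
  · intro t ht
    have hsin1 : Real.sin t ^ 2 < 1 := by
      have hc : 0 < Real.cos t := Real.cos_pos_of_mem_Ioo
        ⟨by linarith [ht.1, Real.pi_pos], ht.2⟩
      nlinarith [Real.sin_sq_add_cos_sq t]
    set u := 1 - k ^ 2 * Real.sin t ^ 2 with hu
    have hu2 : 1 / 2 < u := by nlinarith [sq_nonneg k, sq_nonneg (Real.sin t)]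
    have hsu : 0 < Real.sqrt u := Real.sqrt_pos.mpr (by linarith)
    rw [sub_pos, div_lt_iff₀ hsu]
    nlinarith [Real.mul_self_sqrt (le_of_lt (by linarith : (0:ℝ) < u))]
  · positivity

/-- The unique root `k₀ ∈ (0,1)` of `2E(k) − K(k) = 0` satisfies `1 − 2k₀² < 0`,
i.e. `k₀ > 1/√2`; consequently `Y₀¹ = (1 − 2k₀²)/(2k₀√(1 − k₀²)) < 0`. -/
theorem k₀_gt_inv_sqrt_two (k₀ : ℝ) (hk₀ : k₀ ∈ Set.Ioo (0:ℝ) 1)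
    (hroot : 2 * E k₀ - K k₀ = 0) :
    1 - 2 * k₀^2 < 0 ∧ 1 / Real.sqrt 2 < k₀ ∧
      (1 - 2 * k₀^2) / (2 * k₀ * Real.sqrt (1 - k₀^2)) < 0 := by
  obtain ⟨h0, h1⟩ := hk₀
  have h2 : 1 - 2 * k₀ ^ 2 < 0 := by
    by_contra h
    push_neg at h
    have := aux_pos k₀ h0 h1 (by linarith)
    linarith
  have hsqrt2 : 1 / Real.sqrt 2 < k₀ := by
    have h2pos : (0:ℝ) < Real.sqrt 2 := Real.sqrt_pos.mpr (by norm_num)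
    rw [div_lt_iff₀ h2pos]
    nlinarith [Real.sq_sqrt (by norm_num : (2:ℝ) ≥ 0), h2pos]
  refine ⟨h2, hsqrt2, div_neg_of_neg_of_pos h2 ?_⟩
  have : 0 < Real.sqrt (1 - k₀ ^ 2) := Real.sqrt_pos.mpr (by nlinarith)
  positivity
end

section
/- For every k ∈ (0,1), the function k ↦ ι₄(k)/√(1 − k²) is differentiable at k with derivative k·ι₂(k)/(1 − k²)^{3/2}, where ι₄(k) = (2 − k²)K(k) − 2E(k) and ι₂(k) = K(k) − E(k). -/
open Real Set Filter Topology

noncomputable def ι₂ (k : ℝ) : ℝ := K k - E k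

noncomputable def ι₄ (k : ℝ) : ℝ := (2 - k^2) * K k - 2 * E k


section Aux
open MeasureTheory Metric


lemma vpos {x : ℝ} (hx : |x| < 1) (t : ℝ) : 0 < 1 - x^2 * Real.sin t ^ 2 := by
  have h1 : x^2 < 1 := by nlinarith [sq_abs x, abs_nonneg x]
  nlinarith [Real.sin_sq_le_one t, sq_nonneg x]

lemma hasDerivAt_v (t x : ℝ) :
    HasDerivAt (fun x : ℝ => 1 - x^2 * Real.sin t ^ 2) (-(2*x*Real.sin t ^2)) x := by
  have := ((hasDerivAt_pow 2 x).mul_const (Real.sin t ^ 2)).const_sub 1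
  simpa [mul_comm, mul_assoc] using this

lemma hasDerivAt_sqrtv (t : ℝ) {x : ℝ} (hx : |x| < 1) :
    HasDerivAt (fun x : ℝ => Real.sqrt (1 - x^2 * Real.sin t ^ 2))
      (-(x * Real.sin t ^2) / Real.sqrt (1 - x^2 * Real.sin t ^ 2)) x := by
  have hv := vpos hx t
  have h := (Real.hasDerivAt_sqrt hv.ne').comp x (hasDerivAt_v t x)
  refine h.congr_deriv ?_
  have hs : Real.sqrt (1 - x^2 * Real.sin t ^ 2) ≠ 0 := (Real.sqrt_pos.2 hv).ne'
  field_simp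

lemma hasDerivAt_invsqrtv (t : ℝ) {x : ℝ} (hx : |x| < 1) :
    HasDerivAt (fun x : ℝ => 1 / Real.sqrt (1 - x^2 * Real.sin t ^ 2))
      (x * Real.sin t ^2 /
        ((1 - x^2 * Real.sin t ^ 2) * Real.sqrt (1 - x^2 * Real.sin t ^ 2))) x := by
  have hv := vpos hx t
  have hs : Real.sqrt (1 - x^2 * Real.sin t ^ 2) ≠ 0 := (Real.sqrt_pos.2 hv).ne'
  have h := (hasDerivAt_sqrtv t hx).inv hs
  have h2 : Real.sqrt (1 - x^2 * Real.sin t ^ 2) ^ 2 = 1 - x^2 * Real.sin t ^ 2 :=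
    Real.sq_sqrt hv.le
  simp only [one_div]
  refine h.congr_deriv ?_
  rw [h2, neg_div (Real.sqrt _) (x * Real.sin t ^ 2), neg_neg, div_div, mul_comm (Real.sqrt _) (1 - x ^ 2 * Real.sin t ^ 2)]

lemma cont_sqrtv (x : ℝ) : Continuous fun t => Real.sqrt (1 - x^2 * Real.sin t ^ 2) :=
  (continuous_const.sub (continuous_const.mul (Real.continuous_sin.pow 2))).sqrt

lemma cont_invsqrtv {x : ℝ} (hx : |x| < 1) :
    Continuous fun t => 1 / Real.sqrt (1 - x^2 * Real.sin t ^ 2) :=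
  continuous_const.div (cont_sqrtv x) (fun t => (Real.sqrt_pos.2 (vpos hx t)).ne')

lemma ball_abs {k : ℝ} (hk : k ∈ Set.Ioo (0:ℝ) 1) {x : ℝ}
    (hx : x ∈ Metric.ball k ((1-k)/2)) : |x| ≤ (1+k)/2 := by
  obtain ⟨hk0, hk1⟩ := hk
  rw [Metric.mem_ball, Real.dist_eq] at hx
  rw [abs_le]
  constructor <;> [skip; skip] <;> cases' abs_lt.1 hx with h1 h2 <;> linarith

lemma b_lt_one {k : ℝ} (hk : k ∈ Set.Ioo (0:ℝ) 1) : (1+k)/2 < 1 := by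
  obtain ⟨hk0, hk1⟩ := hk; linarith

lemma hasDerivAt_K {k : ℝ} (hk : k ∈ Set.Ioo (0:ℝ) 1) :
    HasDerivAt K
      (∫ t in (0:ℝ)..(π/2), k * Real.sin t ^2 /
        ((1 - k^2 * Real.sin t ^ 2) * Real.sqrt (1 - k^2 * Real.sin t ^ 2))) k := by
  obtain ⟨hk0, hk1⟩ := hk
  set b : ℝ := (1+k)/2 with hb
  have hbpos : 0 < b := by positivity
  have hb1 : b < 1 := b_lt_one ⟨hk0, hk1⟩
  have hb2 : b^2 < 1 := by nlinarith
  have hub : (0:ℝ) < 1 - b^2 := by linarith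
  have hballabs : ∀ x ∈ Metric.ball k ((1-k)/2), |x| < 1 := fun x hx =>
    lt_of_le_of_lt (ball_abs ⟨hk0, hk1⟩ hx) hb1
  have hε : (0:ℝ) < (1-k)/2 := by linarith
  have key := intervalIntegral.hasDerivAt_integral_of_dominated_loc_of_deriv_le
    (F := fun x t => 1 / Real.sqrt (1 - x^2 * Real.sin t ^ 2))
    (F' := fun x t => x * Real.sin t ^2 /
        ((1 - x^2 * Real.sin t ^ 2) * Real.sqrt (1 - x^2 * Real.sin t ^ 2)))
    (bound := fun _ => b / ((1 - b^2) * Real.sqrt (1 - b^2)))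
    (μ := MeasureTheory.volume) (a := (0:ℝ)) (b := π/2) (x₀ := k) (Metric.ball_mem_nhds k hε)
    ?meas ?int ?meas' ?bound ?bint ?diff
  · exact key.2
  case meas =>
    filter_upwards [Metric.ball_mem_nhds k hε] with x hx
    exact ((cont_invsqrtv (hballabs x hx)).aestronglyMeasurable).restrict
  case int =>
    have habs : |k| < 1 := by rw [abs_of_pos hk0]; exact hk1
    exact (cont_invsqrtv habs).intervalIntegrable _ _
  case meas' =>
    have habs : |k| < 1 := by rw [abs_of_pos hk0]; exact hk1
    have : Continuous fun t => k * Real.sin t ^2 /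
        ((1 - k^2 * Real.sin t ^ 2) * Real.sqrt (1 - k^2 * Real.sin t ^ 2)) := by
      apply Continuous.div
      · exact continuous_const.mul (Real.continuous_sin.pow 2)
      · exact (continuous_const.sub (continuous_const.mul (Real.continuous_sin.pow 2))).mul
          (cont_sqrtv k)
      · intro t
        exact (mul_pos (vpos habs t) (Real.sqrt_pos.2 (vpos habs t))).ne'
    exact this.aestronglyMeasurable.restrict
  case bound =>
    filter_upwards with t _ x hx
    have habs := hballabs x hx
    have hxb := ball_abs ⟨hk0, hk1⟩ hx
    have hv := vpos habs t
    have hs2 : Real.sin t ^ 2 ≤ 1 := Real.sin_sq_le_one t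
    have hs0 : (0:ℝ) ≤ Real.sin t ^ 2 := sq_nonneg _
    have hvb : 1 - b^2 ≤ 1 - x^2 * Real.sin t ^ 2 := by
      have : x^2 ≤ b^2 := by nlinarith [sq_abs x, abs_nonneg x]
      nlinarith
    have hden : (1-b^2) * Real.sqrt (1-b^2) ≤
        (1 - x^2 * Real.sin t ^ 2) * Real.sqrt (1 - x^2 * Real.sin t ^ 2) :=
      mul_le_mul hvb (Real.sqrt_le_sqrt hvb) (Real.sqrt_nonneg _) hv.le
    rw [Real.norm_eq_abs, abs_div, abs_of_pos (mul_pos hv (Real.sqrt_pos.2 hv))]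
    apply div_le_div₀ (by positivity)
    · rw [abs_mul, abs_of_nonneg hs0]
      calc |x| * Real.sin t ^ 2 ≤ b * 1 := by
            apply mul_le_mul hxb hs2 hs0 hbpos.le
        _ = b := mul_one b
    · positivity
    · exact hden
  case bint => exact intervalIntegrable_const
  case diff =>
    filter_upwards with t _ x hx
    exact hasDerivAt_invsqrtv t (hballabs x hx)

lemma hasDerivAt_E {k : ℝ} (hk : k ∈ Set.Ioo (0:ℝ) 1) :
    HasDerivAt E
      (∫ t in (0:ℝ)..(π/2), -(k * Real.sin t ^2) / Real.sqrt (1 - k^2 * Real.sin t ^ 2)) k := by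
  obtain ⟨hk0, hk1⟩ := hk
  set b : ℝ := (1+k)/2 with hb
  have hbpos : 0 < b := by positivity
  have hb1 : b < 1 := b_lt_one ⟨hk0, hk1⟩
  have hb2 : b^2 < 1 := by nlinarith
  have hub : (0:ℝ) < 1 - b^2 := by linarith
  have hballabs : ∀ x ∈ Metric.ball k ((1-k)/2), |x| < 1 := fun x hx =>
    lt_of_le_of_lt (ball_abs ⟨hk0, hk1⟩ hx) hb1
  have hε : (0:ℝ) < (1-k)/2 := by linarith
  have habs : |k| < 1 := by rw [abs_of_pos hk0]; exact hk1
  have key := intervalIntegral.hasDerivAt_integral_of_dominated_loc_of_deriv_le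
    (F := fun x t => Real.sqrt (1 - x^2 * Real.sin t ^ 2))
    (F' := fun x t => -(x * Real.sin t ^2) / Real.sqrt (1 - x^2 * Real.sin t ^ 2))
    (bound := fun _ => b / Real.sqrt (1 - b^2))
    (μ := MeasureTheory.volume) (a := (0:ℝ)) (b := π/2) (x₀ := k) (Metric.ball_mem_nhds k hε)
    ?meas ?int ?meas' ?bound ?bint ?diff
  · exact key.2
  case meas =>
    filter_upwards [Metric.ball_mem_nhds k hε] with x _
    exact (cont_sqrtv x).aestronglyMeasurable.restrict
  case int => exact (cont_sqrtv k).intervalIntegrable _ _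
  case meas' =>
    have : Continuous fun t => -(k * Real.sin t ^2) / Real.sqrt (1 - k^2 * Real.sin t ^ 2) :=
      Continuous.div (continuous_const.mul (Real.continuous_sin.pow 2)).neg (cont_sqrtv k)
        (fun t => (Real.sqrt_pos.2 (vpos habs t)).ne')
    exact this.aestronglyMeasurable.restrict
  case bound =>
    filter_upwards with t _ x hx
    have habsx := hballabs x hx
    have hxb := ball_abs ⟨hk0, hk1⟩ hx
    have hv := vpos habsx t
    have hs2 : Real.sin t ^ 2 ≤ 1 := Real.sin_sq_le_one t
    have hs0 : (0:ℝ) ≤ Real.sin t ^ 2 := sq_nonneg _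
    have hvb : 1 - b^2 ≤ 1 - x^2 * Real.sin t ^ 2 := by
      have : x^2 ≤ b^2 := by nlinarith [sq_abs x, abs_nonneg x]
      nlinarith
    rw [Real.norm_eq_abs, abs_div, abs_neg, abs_of_pos (Real.sqrt_pos.2 hv)]
    apply div_le_div₀ (by positivity)
    · rw [abs_mul, abs_of_nonneg hs0]
      calc |x| * Real.sin t ^ 2 ≤ b * 1 := mul_le_mul hxb hs2 hs0 hbpos.le
        _ = b := mul_one b
    · positivity
    · exact Real.sqrt_le_sqrt hvb
  case bint => exact intervalIntegrable_const
  case diff =>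
    filter_upwards with t _ x hx
    exact hasDerivAt_sqrtv t (hballabs x hx)

lemma hasDerivAt_phi {k : ℝ} (habs : |k| < 1) (t : ℝ) :
    HasDerivAt (fun t => Real.sin t * Real.cos t / Real.sqrt (1 - k^2 * Real.sin t ^ 2))
      ((Real.cos t ^2 - Real.sin t ^2) / Real.sqrt (1 - k^2 * Real.sin t ^ 2)
        + k^2 * (Real.sin t ^2 * Real.cos t ^2) /
          ((1 - k^2 * Real.sin t ^ 2) * Real.sqrt (1 - k^2 * Real.sin t ^ 2))) t := by
  have hv := vpos habs t
  have hw : Real.sqrt (1 - k^2 * Real.sin t ^ 2) ≠ 0 := (Real.sqrt_pos.2 hv).ne'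
  have hnum : HasDerivAt (fun t => Real.sin t * Real.cos t)
      (Real.cos t * Real.cos t + Real.sin t * (-Real.sin t)) t :=
    (Real.hasDerivAt_sin t).mul (Real.hasDerivAt_cos t)
  have hvin : HasDerivAt (fun t : ℝ => 1 - k^2 * Real.sin t ^ 2)
      (-(k^2 * ((2:ℕ) * Real.sin t ^ 1 * Real.cos t))) t :=
    (((Real.hasDerivAt_sin t).pow 2).const_mul (k^2)).const_sub 1
  have hden := (Real.hasDerivAt_sqrt hv.ne').comp t hvin
  have h := hnum.div hden hw
  refine h.congr_deriv ?_
  have h2 : Real.sqrt (1 - k^2 * Real.sin t ^ 2) ^ 2 = 1 - k^2 * Real.sin t ^ 2 :=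
    Real.sq_sqrt hv.le
  have hinv2 : Real.sqrt (1 - k^2 * Real.sin t ^ 2) * (1 / (2 * Real.sqrt (1 - k^2 * Real.sin t ^ 2))) = 1/2 := by
    field_simp
  simp only [Function.comp_apply]
  rw [h2, div_add_div _ _ hw (mul_ne_zero hv.ne' hw), div_eq_div_iff hv.ne' (mul_ne_zero hw (mul_ne_zero hv.ne' hw))]
  linear_combination ((Real.cos t ^2 - Real.sin t ^2) * (1 - k^2 * Real.sin t ^ 2) * Real.sqrt (1 - k^2 * Real.sin t ^ 2)) * h2
    + (2 * k^2 * Real.sin t ^2 * Real.cos t ^2 * (1 - k^2 * Real.sin t ^ 2) * Real.sqrt (1 - k^2 * Real.sin t ^ 2)) * hinv2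

lemma cont_div_w {k : ℝ} (habs : |k| < 1) {f : ℝ → ℝ} (hf : Continuous f) :
    Continuous fun t => f t / Real.sqrt (1 - k^2 * Real.sin t ^ 2) :=
  hf.div (cont_sqrtv k) fun t => (Real.sqrt_pos.2 (vpos habs t)).ne'

lemma cont_div_vw {k : ℝ} (habs : |k| < 1) {f : ℝ → ℝ} (hf : Continuous f) :
    Continuous fun t => f t /
      ((1 - k^2 * Real.sin t ^ 2) * Real.sqrt (1 - k^2 * Real.sin t ^ 2)) :=
  hf.div ((continuous_const.sub (continuous_const.mul (Real.continuous_sin.pow 2))).mul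
    (cont_sqrtv k)) fun t => (mul_pos (vpos habs t) (Real.sqrt_pos.2 (vpos habs t))).ne'

lemma D_eq {k : ℝ} (habs : |k| < 1) :
    (1 - k^2) * (∫ t in (0:ℝ)..(π/2), Real.sin t ^2 /
        ((1 - k^2 * Real.sin t ^ 2) * Real.sqrt (1 - k^2 * Real.sin t ^ 2)))
      = (∫ t in (0:ℝ)..(π/2), 1 / Real.sqrt (1 - k^2 * Real.sin t ^ 2))
        - (∫ t in (0:ℝ)..(π/2), Real.sin t ^2 / Real.sqrt (1 - k^2 * Real.sin t ^ 2)) := by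
  have hcs : Continuous fun t : ℝ => Real.sin t ^ 2 := Real.continuous_sin.pow 2
  have hcs4 : Continuous fun t : ℝ => Real.sin t ^ 4 := Real.continuous_sin.pow 4
  have hiA : IntervalIntegrable (fun t => 1 / Real.sqrt (1 - k^2 * Real.sin t ^ 2))
      MeasureTheory.volume 0 (π/2) := (cont_div_w habs continuous_const).intervalIntegrable _ _
  have hiB : IntervalIntegrable (fun t => Real.sin t ^2 / Real.sqrt (1 - k^2 * Real.sin t ^ 2))
      MeasureTheory.volume 0 (π/2) := (cont_div_w habs hcs).intervalIntegrable _ _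
  have hiD : IntervalIntegrable (fun t => Real.sin t ^2 /
      ((1 - k^2 * Real.sin t ^ 2) * Real.sqrt (1 - k^2 * Real.sin t ^ 2)))
      MeasureTheory.volume 0 (π/2) := (cont_div_vw habs hcs).intervalIntegrable _ _
  have hiG : IntervalIntegrable (fun t => Real.sin t ^4 /
      ((1 - k^2 * Real.sin t ^ 2) * Real.sqrt (1 - k^2 * Real.sin t ^ 2)))
      MeasureTheory.volume 0 (π/2) := (cont_div_vw habs hcs4).intervalIntegrable _ _
  -- FTC : the integral of ψ vanishes
  have hψcont : Continuous fun t =>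
      (Real.cos t ^2 - Real.sin t ^2) / Real.sqrt (1 - k^2 * Real.sin t ^ 2)
        + k^2 * (Real.sin t ^2 * Real.cos t ^2) /
          ((1 - k^2 * Real.sin t ^ 2) * Real.sqrt (1 - k^2 * Real.sin t ^ 2)) :=
    (cont_div_w habs ((Real.continuous_cos.pow 2).sub hcs)).add
      (cont_div_vw habs (continuous_const.mul (hcs.mul (Real.continuous_cos.pow 2))))
  have hFTC : (∫ t in (0:ℝ)..(π/2),
      ((Real.cos t ^2 - Real.sin t ^2) / Real.sqrt (1 - k^2 * Real.sin t ^ 2)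
        + k^2 * (Real.sin t ^2 * Real.cos t ^2) /
          ((1 - k^2 * Real.sin t ^ 2) * Real.sqrt (1 - k^2 * Real.sin t ^ 2)))) = 0 := by
    rw [intervalIntegral.integral_eq_sub_of_hasDerivAt
      (f := fun t => Real.sin t * Real.cos t / Real.sqrt (1 - k^2 * Real.sin t ^ 2))
      (fun t _ => hasDerivAt_phi habs t) (hψcont.intervalIntegrable _ _)]
    simp
  -- decompose ψ
  have hdecomp : (∫ t in (0:ℝ)..(π/2),
      ((Real.cos t ^2 - Real.sin t ^2) / Real.sqrt (1 - k^2 * Real.sin t ^ 2)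
        + k^2 * (Real.sin t ^2 * Real.cos t ^2) /
          ((1 - k^2 * Real.sin t ^ 2) * Real.sqrt (1 - k^2 * Real.sin t ^ 2))))
      = ((∫ t in (0:ℝ)..(π/2), 1 / Real.sqrt (1 - k^2 * Real.sin t ^ 2))
          - 2 * (∫ t in (0:ℝ)..(π/2), Real.sin t ^2 / Real.sqrt (1 - k^2 * Real.sin t ^ 2)))
        + (k^2 * (∫ t in (0:ℝ)..(π/2), Real.sin t ^2 /
              ((1 - k^2 * Real.sin t ^ 2) * Real.sqrt (1 - k^2 * Real.sin t ^ 2)))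
           - k^2 * (∫ t in (0:ℝ)..(π/2), Real.sin t ^4 /
              ((1 - k^2 * Real.sin t ^ 2) * Real.sqrt (1 - k^2 * Real.sin t ^ 2)))) := by
    rw [← intervalIntegral.integral_const_mul, ← intervalIntegral.integral_const_mul,
        ← intervalIntegral.integral_const_mul, ← intervalIntegral.integral_sub (hiD.const_mul _) (hiG.const_mul _),
        ← intervalIntegral.integral_sub hiA (hiB.const_mul _),
        ← intervalIntegral.integral_add]
    · apply intervalIntegral.integral_congr
      intro t _
      have hv := vpos habs t
      have hw : Real.sqrt (1 - k^2 * Real.sin t ^ 2) ≠ 0 := (Real.sqrt_pos.2 hv).ne'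
      have hc : Real.cos t ^ 2 = 1 - Real.sin t ^ 2 := Real.cos_sq' t
      field_simp
      rw [hc]; ring
    · exact hiA.sub (hiB.const_mul _)
    · exact (hiD.const_mul _).sub (hiG.const_mul _)
  -- B = D - k² G
  have hBD : (∫ t in (0:ℝ)..(π/2), Real.sin t ^2 / Real.sqrt (1 - k^2 * Real.sin t ^ 2))
      = (∫ t in (0:ℝ)..(π/2), Real.sin t ^2 /
          ((1 - k^2 * Real.sin t ^ 2) * Real.sqrt (1 - k^2 * Real.sin t ^ 2)))
        - k^2 * (∫ t in (0:ℝ)..(π/2), Real.sin t ^4 /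
          ((1 - k^2 * Real.sin t ^ 2) * Real.sqrt (1 - k^2 * Real.sin t ^ 2))) := by
    rw [← intervalIntegral.integral_const_mul, ← intervalIntegral.integral_sub hiD (hiG.const_mul _)]
    apply intervalIntegral.integral_congr
    intro t _
    have hv := vpos habs t
    have hw : Real.sqrt (1 - k^2 * Real.sin t ^ 2) ≠ 0 := (Real.sqrt_pos.2 hv).ne'
    have hv' : 1 - k^2 * Real.sin t ^ 2 ≠ 0 := hv.ne'
    dsimp only
    rw [mul_div_assoc', div_sub_div_same, show Real.sin t ^ 2 - k^2 * Real.sin t ^ 4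
      = (1 - k^2 * Real.sin t ^ 2) * Real.sin t ^ 2 by ring, mul_div_mul_left _ _ hv']
  rw [hdecomp] at hFTC
  linarith [hFTC, hBD]

lemma E_eq {k : ℝ} (habs : |k| < 1) :
    E k = (∫ t in (0:ℝ)..(π/2), 1 / Real.sqrt (1 - k^2 * Real.sin t ^ 2))
      - k^2 * (∫ t in (0:ℝ)..(π/2), Real.sin t ^2 / Real.sqrt (1 - k^2 * Real.sin t ^ 2)) := by
  have hcs : Continuous fun t : ℝ => Real.sin t ^ 2 := Real.continuous_sin.pow 2
  have hiA : IntervalIntegrable (fun t => 1 / Real.sqrt (1 - k^2 * Real.sin t ^ 2))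
      MeasureTheory.volume 0 (π/2) := (cont_div_w habs continuous_const).intervalIntegrable _ _
  have hiB : IntervalIntegrable (fun t => Real.sin t ^2 / Real.sqrt (1 - k^2 * Real.sin t ^ 2))
      MeasureTheory.volume 0 (π/2) := (cont_div_w habs hcs).intervalIntegrable _ _
  rw [← intervalIntegral.integral_const_mul, ← intervalIntegral.integral_sub hiA (hiB.const_mul _)]
  apply intervalIntegral.integral_congr
  intro t _
  have hv := vpos habs t
  have hw : Real.sqrt (1 - k^2 * Real.sin t ^ 2) ≠ 0 := (Real.sqrt_pos.2 hv).ne'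
  rw [eq_comm, sub_eq_iff_eq_add]
  field_simp
  rw [Real.sq_sqrt hv.le]; ring

end Aux

/-- For every `k ∈ (0,1)`, the function `k ↦ ι₄(k)/√(1 − k²)` has derivative
`k·ι₂(k)/(1 − k²)^{3/2}` at `k`. -/
theorem hasDerivAt_iota₄_div_sqrt :
    ∀ k ∈ Set.Ioo (0:ℝ) 1,
      HasDerivAt (fun x => ι₄ x / Real.sqrt (1 - x^2))
        (k * ι₂ k / (1 - k^2) ^ ((3:ℝ)/2)) k := by
  intro k hk
  obtain ⟨hk0, hk1⟩ := hk
  have habs : |k| < 1 := by rw [abs_of_pos hk0]; exact hk1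
  have hu : (0:ℝ) < 1 - k^2 := by nlinarith
  have huroot : Real.sqrt (1 - k^2) ≠ 0 := (Real.sqrt_pos.2 hu).ne'
  set A := ∫ t in (0:ℝ)..(π/2), 1 / Real.sqrt (1 - k^2 * Real.sin t ^ 2) with hA
  set B := ∫ t in (0:ℝ)..(π/2), Real.sin t ^2 / Real.sqrt (1 - k^2 * Real.sin t ^ 2) with hB
  set D := ∫ t in (0:ℝ)..(π/2), Real.sin t ^2 /
      ((1 - k^2 * Real.sin t ^ 2) * Real.sqrt (1 - k^2 * Real.sin t ^ 2)) with hDdef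
  have hD : (1 - k^2) * D = A - B := D_eq habs
  have hKval : K k = A := rfl
  have hEval : E k = A - k^2 * B := E_eq habs
  -- derivative of K
  have hK' : HasDerivAt K (k * D) k := by
    have h := hasDerivAt_K ⟨hk0, hk1⟩
    have heq : (∫ t in (0:ℝ)..(π/2), k * Real.sin t ^2 /
        ((1 - k^2 * Real.sin t ^ 2) * Real.sqrt (1 - k^2 * Real.sin t ^ 2))) = k * D := by
      rw [hDdef, ← intervalIntegral.integral_const_mul]
      apply intervalIntegral.integral_congr
      intro t _
      simp [mul_div_assoc]
    rwa [heq] at h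
  -- derivative of E
  have hE' : HasDerivAt E (-(k * B)) k := by
    have h := hasDerivAt_E ⟨hk0, hk1⟩
    have heq : (∫ t in (0:ℝ)..(π/2), -(k * Real.sin t ^2) /
        Real.sqrt (1 - k^2 * Real.sin t ^ 2)) = -(k * B) := by
      rw [hB, ← intervalIntegral.integral_const_mul, ← intervalIntegral.integral_neg]
      apply intervalIntegral.integral_congr
      intro t _
      simp [neg_div, mul_div_assoc]
    rwa [heq] at h
  -- derivative of ι₄
  have h2x : HasDerivAt (fun x : ℝ => 2 - x^2) (-(2*k)) k := by
    simpa using (hasDerivAt_pow 2 k).const_sub 2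
  have hι₄ : HasDerivAt ι₄ (-(2*k) * K k + (2 - k^2) * (k * D) - 2 * (-(k * B))) k := by
    have := (h2x.mul hK').sub (hE'.const_mul 2)
    exact this
  -- derivative of the denominator
  have hden : HasDerivAt (fun x : ℝ => Real.sqrt (1 - x^2))
      (1 / (2 * Real.sqrt (1 - k^2)) * (-(2*k))) k := by
    have hin : HasDerivAt (fun x : ℝ => 1 - x^2) (-(2*k)) k := by
      simpa using (hasDerivAt_pow 2 k).const_sub 1
    exact (Real.hasDerivAt_sqrt hu.ne').comp k hin
  have hq := hι₄.div hden huroot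
  refine hq.congr_deriv ?_
  have hsq : Real.sqrt (1 - k^2) ^ 2 = 1 - k^2 := Real.sq_sqrt hu.le
  have h32 : ((1:ℝ) - k^2) ^ ((3:ℝ)/2) = (1 - k^2) * Real.sqrt (1 - k^2) := by
    rw [show (3:ℝ)/2 = 1 + 1/2 by norm_num, Real.rpow_add hu, Real.rpow_one,
      ← Real.sqrt_eq_rpow]
  have hι₂val : ι₂ k = k^2 * B := by
    show K k - E k = k^2 * B
    rw [hKval, hEval]; ring
  have hι₄val : ι₄ k = (2 - k^2) * A - 2 * (A - k^2 * B) := by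
    show (2 - k^2) * K k - 2 * E k = _
    rw [hKval, hEval]
  rw [hι₂val, hι₄val, hKval, h32, hsq]
  have hinv : Real.sqrt (1 - k^2) * (1 / (2 * Real.sqrt (1 - k^2))) = 1/2 := by
    field_simp
  rw [div_eq_div_iff hu.ne' (mul_ne_zero hu.ne' huroot)]
  linear_combination ((-(2 * k) * A + (2 - k ^ 2) * (k * D) - 2 * -(k * B)) * (1 - k^2)) * hsq
    + (2 * k * ((2 - k ^ 2) * A - 2 * (A - k ^ 2 * B)) * (1 - k^2)) * hinv
    + ((1 - k^2) * (2 - k^2) * k) * hD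
end

section
/- The map Φ(k, σ) = (4ι₁(k)/σ, (8/(3σ³))(k²ι₁(k) + ι₂(k))) is a bijection from (0, k₀) × (0, +∞) onto (0, +∞) × (0, +∞). -/
open Real Set Filter Topology

noncomputable def ι₁ (k : ℝ) : ℝ := 2 * E k - K k

lemma aux_pos_s15 {k : ℝ} (hk : k^2 < 1) (t : ℝ) : 0 < 1 - k^2 * Real.sin t ^ 2 := by
  nlinarith [Real.sin_sq_le_one t, sq_nonneg k, sq_nonneg (Real.sin t)]

lemma contE_t {k : ℝ} : Continuous fun t => Real.sqrt (1 - k^2 * Real.sin t ^ 2) := by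
  fun_prop

lemma contK_t {k : ℝ} (hk : k^2 < 1) :
    Continuous fun t => 1 / Real.sqrt (1 - k^2 * Real.sin t ^ 2) := by
  apply Continuous.div continuous_const (by fun_prop)
  exact fun t => (Real.sqrt_pos.2 (aux_pos_s15 hk t)).ne'

lemma intE {k : ℝ} : IntervalIntegrable (fun t => Real.sqrt (1 - k^2 * Real.sin t ^ 2))
    MeasureTheory.volume 0 (π/2) := contE_t.intervalIntegrable _ _

lemma intK {k : ℝ} (hk : k^2 < 1) :
    IntervalIntegrable (fun t => 1 / Real.sqrt (1 - k^2 * Real.sin t ^ 2))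
    MeasureTheory.volume 0 (π/2) := (contK_t hk).intervalIntegrable _ _

lemma i1_eq {k : ℝ} (hk : k^2 < 1) :
    ι₁ k = ∫ t in (0:ℝ)..(π/2),
      (2 * Real.sqrt (1 - k^2 * Real.sin t ^ 2) - 1 / Real.sqrt (1 - k^2 * Real.sin t ^ 2)) := by
  rw [intervalIntegral.integral_sub (intE.const_mul 2) (intK hk),
    intervalIntegral.integral_const_mul]
  rfl

lemma i2_eq {k : ℝ} (hk : k^2 < 1) :
    ι₂ k = ∫ t in (0:ℝ)..(π/2),
      (1 / Real.sqrt (1 - k^2 * Real.sin t ^ 2) - Real.sqrt (1 - k^2 * Real.sin t ^ 2)) := by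
  rw [intervalIntegral.integral_sub (intK hk) intE]
  rfl

lemma sqrt_pair {u v : ℝ} (hu : 0 ≤ u) (huv : u < v) (hv : v < 1) :
    Real.sqrt (1-v) < Real.sqrt (1-u) ∧ 1/Real.sqrt (1-u) < 1/Real.sqrt (1-v) := by
  have h1 : Real.sqrt (1-v) < Real.sqrt (1-u) :=
    Real.sqrt_lt_sqrt (by linarith) (by linarith)
  have h2 : 0 < Real.sqrt (1-v) := Real.sqrt_pos.2 (by linarith)
  exact ⟨h1, one_div_lt_one_div_of_lt h2 h1⟩

lemma uv_facts {a b t : ℝ} (ha : 0 ≤ a) (hab : a < b) (hb : b^2 < 1)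
    (ht : Real.sin t ≠ 0) :
    0 ≤ a^2 * Real.sin t ^ 2 ∧ a^2 * Real.sin t ^ 2 < b^2 * Real.sin t ^ 2 ∧
      b^2 * Real.sin t ^ 2 < 1 := by
  have hs : 0 < Real.sin t ^ 2 := by positivity
  have hs1 : Real.sin t ^ 2 ≤ 1 := Real.sin_sq_le_one t
  have hab2 : a^2 < b^2 := by nlinarith
  refine ⟨by positivity, by nlinarith, by nlinarith [sq_nonneg b]⟩

lemma sin_ne {t : ℝ} (ht : t ∈ Ioc 0 (π/2)) : Real.sin t ≠ 0 := by
  have := Real.sin_pos_of_pos_of_lt_pi ht.1 (lt_of_le_of_lt ht.2 (by linarith [Real.pi_pos]))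
  exact this.ne'

lemma i1_anti {a b : ℝ} (ha : 0 ≤ a) (hab : a < b) (hb : b^2 < 1) : ι₁ b < ι₁ a := by
  have ha2 : a^2 < 1 := by nlinarith
  rw [i1_eq hb, i1_eq ha2]
  apply intervalIntegral.integral_lt_integral_of_continuousOn_of_le_of_exists_lt
    (by positivity) ((continuous_const.mul contE_t).sub (contK_t hb)).continuousOn
    ((continuous_const.mul contE_t).sub (contK_t ha2)).continuousOn
  · intro t ht
    obtain ⟨h0, h1, h2⟩ := uv_facts ha hab hb (sin_ne ht)
    obtain ⟨g1, g2⟩ := sqrt_pair h0 h1 h2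
    simp only [Pi.sub_apply, Pi.mul_apply]
    linarith
  · refine ⟨π/2, ⟨by positivity, le_rfl⟩, ?_⟩
    obtain ⟨h0, h1, h2⟩ := uv_facts ha hab hb (sin_ne ⟨by positivity, le_rfl⟩)
    obtain ⟨g1, g2⟩ := sqrt_pair h0 h1 h2
    simp only [Pi.sub_apply, Pi.mul_apply]
    linarith

lemma i2_mono {a b : ℝ} (ha : 0 ≤ a) (hab : a < b) (hb : b^2 < 1) : ι₂ a < ι₂ b := by
  have ha2 : a^2 < 1 := by nlinarith
  rw [i2_eq hb, i2_eq ha2]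
  apply intervalIntegral.integral_lt_integral_of_continuousOn_of_le_of_exists_lt
    (by positivity) ((contK_t ha2).sub contE_t).continuousOn
    ((contK_t hb).sub contE_t).continuousOn
  · intro t ht
    obtain ⟨h0, h1, h2⟩ := uv_facts ha hab hb (sin_ne ht)
    obtain ⟨g1, g2⟩ := sqrt_pair h0 h1 h2
    simp only [Pi.sub_apply, Pi.mul_apply]
    linarith
  · refine ⟨π/2, ⟨by positivity, le_rfl⟩, ?_⟩
    obtain ⟨h0, h1, h2⟩ := uv_facts ha hab hb (sin_ne ⟨by positivity, le_rfl⟩)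
    obtain ⟨g1, g2⟩ := sqrt_pair h0 h1 h2
    simp only [Pi.sub_apply, Pi.mul_apply]
    linarith

lemma i2_zero : ι₂ 0 = 0 := by
  simp [ι₂, K, E]

lemma contE_s15 : Continuous E := by
  unfold E
  apply intervalIntegral.continuous_parametric_intervalIntegral_of_continuous'
  show Continuous fun p : ℝ × ℝ => Real.sqrt (1 - p.1^2 * Real.sin p.2 ^ 2)
  fun_prop

lemma contOn_K {b : ℝ} (hb0 : 0 ≤ b) (hb : b < 1) : ContinuousOn K (Icc (-b) b) := by
  set ε := 1 - b^2 with hε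
  have hεpos : 0 < ε := by nlinarith
  have hc : Continuous fun k : ℝ =>
      ∫ t in (0:ℝ)..(π/2), 1 / Real.sqrt (max (1 - k^2 * Real.sin t ^ 2) ε) := by
    apply intervalIntegral.continuous_parametric_intervalIntegral_of_continuous'
    show Continuous fun p : ℝ × ℝ => 1 / Real.sqrt (max (1 - p.1^2 * Real.sin p.2 ^ 2) ε)
    apply Continuous.div continuous_const (by fun_prop)
    intro p
    exact (Real.sqrt_pos.2 (lt_of_lt_of_le hεpos (le_max_right _ _))).ne'
  apply ContinuousOn.congr hc.continuousOn
  intro k hk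
  have hk2 : k^2 ≤ b^2 := sq_le_sq' hk.1 hk.2
  unfold K
  congr 1
  funext t
  have : ε ≤ 1 - k^2 * Real.sin t ^ 2 := by
    nlinarith [Real.sin_sq_le_one t, sq_nonneg (Real.sin t), sq_nonneg k]
  rw [max_eq_left this]

noncomputable def cc (k : ℝ) : ℝ := k^2/(24 * ι₁ k^2) + ι₂ k/(24 * ι₁ k^3)

lemma cc_eq {k : ℝ} (h : ι₁ k ≠ 0) :
    cc k = (k^2 * ι₁ k + ι₂ k)/(24 * ι₁ k^3) := by
  unfold cc; field_simp

section main
variable {k₀ : ℝ} (hk₀ : k₀ ∈ Set.Ioo (0:ℝ) 1) (hroot : 2 * E k₀ - K k₀ = 0)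
include hk₀ hroot

lemma fpos : ∀ k ∈ Ico 0 k₀, 0 < ι₁ k := by
  intro k hk
  have h := i1_anti hk.1 hk.2 (by nlinarith [hk₀.1, hk₀.2] : k₀^2 < 1)
  have h0 : ι₁ k₀ = 0 := hroot
  linarith

omit hroot in
lemma i2pos : ∀ k ∈ Ioc 0 k₀, 0 < ι₂ k := by
  intro k hk
  have := i2_mono (le_refl 0) hk.1 (by nlinarith [hk.1, hk.2, hk₀.1, hk₀.2] : k^2 < 1)
  rwa [i2_zero] at this

lemma cc_strictMono : StrictMonoOn cc (Ioo 0 k₀) := by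
  intro x hx y hy hxy
  have hfx := fpos hk₀ hroot x ⟨hx.1.le, hx.2⟩
  have hfy := fpos hk₀ hroot y ⟨hy.1.le, hy.2⟩
  have hy2 : y^2 < 1 := by nlinarith [hy.1, hy.2, hk₀.1, hk₀.2]
  have hfyx : ι₁ y < ι₁ x := i1_anti hx.1.le hxy hy2
  have h2 : ι₂ x < ι₂ y := i2_mono hx.1.le hxy hy2
  have h2x : 0 < ι₂ x := i2pos hk₀ x ⟨hx.1, hx.2.le⟩
  unfold cc
  have hx2 : x^2 < y^2 := by nlinarith [hx.1]
  have t1 : x^2/(24 * ι₁ x^2) < y^2/(24 * ι₁ y^2) := by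
    calc x^2/(24 * ι₁ x^2) ≤ x^2/(24 * ι₁ y^2) := by gcongr <;> nlinarith
      _ < y^2/(24 * ι₁ y^2) := by gcongr <;> nlinarith
  have t2 : ι₂ x/(24 * ι₁ x^3) < ι₂ y/(24 * ι₁ y^3) := by
    calc ι₂ x/(24 * ι₁ x^3) ≤ ι₂ x/(24 * ι₁ y^3) := by gcongr <;> nlinarith
      _ < ι₂ y/(24 * ι₁ y^3) := by gcongr
  exact add_lt_add t1 t2

omit hroot in
lemma contOn_K₀ : ContinuousOn K (Icc 0 k₀) :=
  (contOn_K hk₀.1.le hk₀.2).mono (fun x hx => ⟨by linarith [hx.1, hk₀.1.le], hx.2⟩)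

omit hroot in
lemma contOn_i1 : ContinuousOn ι₁ (Icc 0 k₀) := by
  unfold ι₁; exact (continuousOn_const.mul contE_s15.continuousOn).sub (contOn_K₀ hk₀)

lemma contOn_cc : ContinuousOn cc (Ico 0 k₀) := by
  have hK := contOn_K₀ hk₀
  have hi1 := contOn_i1 hk₀
  have hi2 : ContinuousOn ι₂ (Icc 0 k₀) := hK.sub contE_s15.continuousOn
  have hi1' := hi1.mono Ico_subset_Icc_self
  have hi2' := hi2.mono Ico_subset_Icc_self
  unfold cc
  apply ContinuousOn.add
  · exact (continuousOn_pow 2).div ((continuousOn_const.mul (hi1'.pow 2)))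
      (fun k hk => by have := fpos hk₀ hroot k hk; positivity)
  · exact hi2'.div ((continuousOn_const.mul (hi1'.pow 3)))
      (fun k hk => by have := fpos hk₀ hroot k hk; positivity)

omit hk₀ hroot in
lemma cc_zero : cc 0 = 0 := by
  simp [cc, i2_zero]

end main


/-- The map `Φ(k, σ) = (4ι₁(k)/σ, (8/(3σ³))(k²ι₁(k) + ι₂(k)))` is a bijection from
`(0, k₀) × (0, +∞)` onto `(0, +∞) × (0, +∞)`. -/
theorem Phi_bijOn (k₀ : ℝ) (hk₀ : k₀ ∈ Set.Ioo (0:ℝ) 1)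
    (hroot : 2 * E k₀ - K k₀ = 0) :
    Set.BijOn
      (fun q : ℝ × ℝ =>
        (4 * ι₁ q.1 / q.2, 8 / (3 * q.2^3) * (q.1^2 * ι₁ q.1 + ι₂ q.1)))
      (Set.Ioo 0 k₀ ×ˢ Set.Ioi 0) (Set.Ioi 0 ×ˢ Set.Ioi 0) := by
  have hfpos := fpos hk₀ hroot
  have hgpos : ∀ k ∈ Ioo 0 k₀, 0 < k^2 * ι₁ k + ι₂ k := by
    intro k hk
    have h1 := hfpos k ⟨hk.1.le, hk.2⟩
    have h2 := i2pos hk₀ k ⟨hk.1, hk.2.le⟩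
    nlinarith [mul_nonneg (sq_nonneg k) h1.le]
  refine ⟨?_, ?_, ?_⟩
  · -- MapsTo
    rintro ⟨k, σ⟩ ⟨hk, hσ⟩
    have hσ0 : (0:ℝ) < σ := hσ
    have h1 := hfpos k ⟨hk.1.le, hk.2⟩
    have h2 := hgpos k hk
    exact ⟨mem_Ioi.2 (by positivity), mem_Ioi.2 (by positivity)⟩
  · -- InjOn
    rintro ⟨k, σ⟩ ⟨hk, hσ⟩ ⟨k', σ'⟩ ⟨hk', hσ'⟩ heq
    simp only [Prod.mk.injEq] at heq
    obtain ⟨e1, e2⟩ := heq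
    have hσ0 : (0:ℝ) < σ := hσ
    have hσ0' : (0:ℝ) < σ' := hσ'
    have hA : 0 < ι₁ k := hfpos k ⟨hk.1.le, hk.2⟩
    have hA' : 0 < ι₁ k' := hfpos k' ⟨hk'.1.le, hk'.2⟩
    have e1' : ι₁ k * σ' = ι₁ k' * σ := by
      field_simp at e1; linarith
    have e2' : (k^2 * ι₁ k + ι₂ k) * σ'^3 = (k'^2 * ι₁ k' + ι₂ k') * σ^3 := by
      field_simp at e2; linarith
    have e13 : ι₁ k ^3 * σ'^3 = ι₁ k' ^3 * σ^3 := by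
      have h := congrArg (fun z : ℝ => z^3) e1'
      simpa [mul_pow] using h
    have ecc : cc k = cc k' := by
      rw [cc_eq hA.ne', cc_eq hA'.ne', div_eq_div_iff (by positivity) (by positivity)]
      have key : (k^2 * ι₁ k + ι₂ k) * (24 * ι₁ k' ^3) * (σ^3 * σ'^3)
          = (k'^2 * ι₁ k' + ι₂ k') * (24 * ι₁ k ^3) * (σ^3 * σ'^3) := by
        linear_combination (24 * ι₁ k' ^3 * σ^3) * e2'
          - (24 * (k'^2 * ι₁ k' + ι₂ k') * σ^3) * e13
      exact mul_right_cancel₀ (by positivity) key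
    have hkk : k = k' := (cc_strictMono hk₀ hroot).injOn hk hk' ecc
    subst hkk
    have hσσ : σ = σ' := (mul_left_cancel₀ hA.ne' e1').symm
    rw [hσσ]
  · -- SurjOn
    rintro ⟨x, y⟩ ⟨hx, hy⟩
    have hx0 : (0:ℝ) < x := hx
    have hy0 : (0:ℝ) < y := hy
    set t := y / x^3 with ht
    have htpos : 0 < t := by positivity
    obtain ⟨k₁, hk₁mem, hk₁lt⟩ : ∃ k₁ ∈ Ioo 0 k₀, cc k₁ < t := by
      have h0 : Tendsto cc (𝓝[Ico 0 k₀] 0) (𝓝 0) := by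
        have h : Tendsto cc (𝓝[Ico 0 k₀] 0) (𝓝 (cc 0)) :=
          (contOn_cc hk₀ hroot).continuousWithinAt ⟨le_refl 0, hk₀.1⟩
        rwa [cc_zero] at h
      have h2 : ∀ᶠ k in 𝓝[Ioo 0 k₀] 0, cc k < t :=
        (h0.eventually_lt_const htpos).filter_mono (nhdsWithin_mono _ Ioo_subset_Ico_self)
      have : (𝓝[Ioo 0 k₀] (0:ℝ)).NeBot := by
        rw [← mem_closure_iff_nhdsWithin_neBot, closure_Ioo hk₀.1.ne]
        exact ⟨le_refl 0, hk₀.1.le⟩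
      obtain ⟨k₁, hm, hl⟩ := (eventually_mem_nhdsWithin.and h2).exists
      exact ⟨k₁, hm, hl⟩
    have hι₂k₁ : 0 < ι₂ k₁ := i2pos hk₀ k₁ ⟨hk₁mem.1, hk₁mem.2.le⟩
    set ε := min 1 (ι₂ k₁ / (48 * t)) with hεdef
    have hεpos : 0 < ε := lt_min one_pos (by positivity)
    obtain ⟨k₂, hk₂mem, hk₂lt⟩ : ∃ k₂ ∈ Ioo k₁ k₀, ι₁ k₂ < ε := by
      have h : Tendsto ι₁ (𝓝[Icc 0 k₀] k₀) (𝓝 (ι₁ k₀)) :=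
        (contOn_i1 hk₀).continuousWithinAt ⟨hk₀.1.le, le_refl k₀⟩
      have h0' : ι₁ k₀ = 0 := hroot
      rw [h0'] at h
      have h0 : Tendsto ι₁ (𝓝[Ioo k₁ k₀] k₀) (𝓝 0) :=
        h.mono_left (nhdsWithin_mono _ (fun z hz =>
          ⟨le_trans hk₁mem.1.le hz.1.le, hz.2.le⟩))
      have h1 := h0.eventually_lt_const hεpos
      have : (𝓝[Ioo k₁ k₀] k₀).NeBot := by
        rw [← mem_closure_iff_nhdsWithin_neBot, closure_Ioo (ne_of_lt hk₁mem.2)]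
        exact ⟨hk₁mem.2.le, le_refl _⟩
      obtain ⟨k₂, hm, hl⟩ := (eventually_mem_nhdsWithin.and h1).exists
      exact ⟨k₂, hm, hl⟩
    have hk₂Ioo : k₂ ∈ Ioo 0 k₀ := ⟨hk₁mem.1.trans hk₂mem.1, hk₂mem.2⟩
    have hf2 : 0 < ι₁ k₂ := hfpos k₂ ⟨hk₂Ioo.1.le, hk₂Ioo.2⟩
    have hι₂k₂ : ι₂ k₁ < ι₂ k₂ := i2_mono hk₁mem.1.le hk₂mem.1
      (by nlinarith [hk₂Ioo.2, hk₀.2, hk₂Ioo.1])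
    have hε1 : ε ≤ 1 := min_le_left _ _
    have hε2' : 48 * t * ε ≤ ι₂ k₁ := by
      have := min_le_right 1 (ι₂ k₁ / (48 * t))
      rw [le_div_iff₀ (by positivity)] at this
      linarith
    have hcube : ι₁ k₂ ^3 < ε := by
      have h3 : ι₁ k₂ ^3 < ε^3 := by
        apply pow_lt_pow_left₀ hk₂lt hf2.le (by norm_num)
      have h4 : ε^3 ≤ ε := by
        nlinarith [mul_nonneg (mul_nonneg hεpos.le (sub_nonneg.2 hε1))
          (by linarith : (0:ℝ) ≤ 1 + ε)]
      linarith
    have hlt2 : t < cc k₂ := by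
      have hmul : t * ι₁ k₂ ^3 < t * ε := mul_lt_mul_of_pos_left hcube htpos
      have hb : t * (24 * ι₁ k₂ ^3) < ι₂ k₂ := by nlinarith
      have hq : t < ι₂ k₂ / (24 * ι₁ k₂ ^3) := (lt_div_iff₀ (by positivity)).2 hb
      have hnn : 0 ≤ k₂^2/(24 * ι₁ k₂^2) := by positivity
      show t < k₂^2/(24 * ι₁ k₂^2) + ι₂ k₂/(24 * ι₁ k₂^3)
      linarith
    have hk₁k₂ : k₁ < k₂ := hk₂mem.1
    have hsub : Icc k₁ k₂ ⊆ Ico 0 k₀ := fun z hz =>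
      ⟨le_trans hk₁mem.1.le hz.1, lt_of_le_of_lt hz.2 hk₂Ioo.2⟩
    have hcont : ContinuousOn cc (Icc k₁ k₂) := (contOn_cc hk₀ hroot).mono hsub
    obtain ⟨k, hkmem, hck⟩ := intermediate_value_Icc hk₁k₂.le hcont ⟨hk₁lt.le, hlt2.le⟩
    have hkIoo : k ∈ Ioo 0 k₀ :=
      ⟨lt_of_lt_of_le hk₁mem.1 hkmem.1, lt_of_le_of_lt hkmem.2 hk₂Ioo.2⟩
    have hA : 0 < ι₁ k := hfpos k ⟨hkIoo.1.le, hkIoo.2⟩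
    refine ⟨(k, 4 * ι₁ k / x), ⟨hkIoo, mem_Ioi.2 (by positivity)⟩, ?_⟩
    have hG : (k^2 * ι₁ k + ι₂ k) / (24 * ι₁ k ^3) = y / x^3 := by
      rw [← cc_eq hA.ne']
      exact hck.trans ht
    have hgval : (k^2 * ι₁ k + ι₂ k) * x^3 = y * (24 * ι₁ k ^3) := by
      rw [div_eq_div_iff (by positivity) (by positivity)] at hG
      linarith
    simp only [Prod.mk.injEq]
    constructor
    · field_simp
    · field_simp
      linear_combination (8:ℝ) * hgval
end
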